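/- Let X = ⋃_{k≥1} (A_k ∪ B_{k+1}) ⊆ ℝ², where A_k = [k,∞) × {k} and B_k = {k} × [k−1,k], equipped with the Euclidean metric d_e. Then (X,d_e) is coarsely equivalent to the set P = {(x,y) ∈ ℝ² : x ≥ y ≥ 0} with the Euclidean metric. -/

import Mathlib

open Metric Bornology Function Set

/-- A map between metric spaces is (coarsely) proper if preimages of bounded
sets are bounded. -/
def MetricallyProper {X Y : Type*} [MetricSpace X] [MetricSpace Y] (f : X → Y) : Prop :=
  ∀ B : Set Y, IsBounded B → IsBounded (f ⁻¹' B)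

/-- A coarse map: proper, and uniformly bornologous. -/
def CoarseMap {X Y : Type*} [MetricSpace X] [MetricSpace Y] (f : X → Y) : Prop :=
  MetricallyProper f ∧
    ∀ R > (0:ℝ), ∃ S > (0:ℝ), ∀ x x' : X, dist x x' ≤ R → dist (f x) (f x') ≤ S

/-- Coarsely surjective map. -/
def CoarselySurjective {X Y : Type*} [MetricSpace X] [MetricSpace Y] (f : X → Y) : Prop :=
  ∃ R > (0:ℝ), ∀ y : Y, ∃ x : X, dist y (f x) ≤ R

/-- `f` is coarsely `n`-to-1. -/
def CoarselyNTo1 {X Y : Type*} [MetricSpace X] [MetricSpace Y] (f : X → Y) (n : ℕ) : Prop :=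
  ∀ R > (0:ℝ), ∃ S > (0:ℝ), ∀ A : Set Y, (∀ y ∈ A, ∀ y' ∈ A, dist y y' ≤ R) →
    ∃ V : Fin n → Set X, (∀ i, ∀ x ∈ V i, ∀ x' ∈ V i, dist x x' ≤ S) ∧ f ⁻¹' A ⊆ ⋃ i, V i

/-- `f` is coarsely finite-to-1. -/
def CoarselyFiniteTo1 {X Y : Type*} [MetricSpace X] [MetricSpace Y] (f : X → Y) : Prop :=
  ∀ R > (0:ℝ), ∃ S > (0:ℝ), ∃ m : ℕ, ∀ A : Set Y, (∀ y ∈ A, ∀ y' ∈ A, dist y y' ≤ R) →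
    ∃ V : Fin m → Set X, (∀ i, ∀ x ∈ V i, ∀ x' ∈ V i, dist x x' ≤ S) ∧ f ⁻¹' A ⊆ ⋃ i, V i

/-- Two maps are close. -/
def Close {X Y : Type*} [MetricSpace X] [MetricSpace Y] (f g : X → Y) : Prop :=
  ∃ R > (0:ℝ), ∀ x : X, dist (f x) (g x) ≤ R

/-- `f` is a coarse equivalence. -/
def CoarseEquivalence {X Y : Type*} [MetricSpace X] [MetricSpace Y] (f : X → Y) : Prop :=
  CoarseMap f ∧ ∃ g : Y → X, CoarseMap g ∧ Close (f ∘ g) id ∧ Close (g ∘ f) id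

/-- `X` and `Y` are coarsely equivalent. -/
def CoarselyEquivalent (X Y : Type*) [MetricSpace X] [MetricSpace Y] : Prop :=
  ∃ f : X → Y, CoarseEquivalence f

/-- A family of subsets is uniformly bounded. -/
def UnifBounded {X : Type*} [MetricSpace X] (𝒰 : Set (Set X)) : Prop :=
  ∃ S : ℝ, ∀ U ∈ 𝒰, ∀ x ∈ U, ∀ y ∈ U, dist x y ≤ S

/-- A family of subsets is `R`-disjoint: distinct members lie at distance `> R`. -/
def RDisjointFam {X : Type*} [MetricSpace X] (𝒰 : Set (Set X)) (R : ℝ) : Prop :=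
  ∀ U ∈ 𝒰, ∀ V ∈ 𝒰, U ≠ V → ∀ x ∈ U, ∀ y ∈ V, R < dist x y

/-- `asdim X ≤ n`. -/
def ASDimLE (X : Type*) [MetricSpace X] (n : ℕ) : Prop :=
  ∀ R > (0:ℝ), ∃ 𝒰 : Fin (n + 1) → Set (Set X),
    (∀ i, UnifBounded (𝒰 i)) ∧ (∀ i, RDisjointFam (𝒰 i) R) ∧
      ∀ x : X, ∃ i, ∃ U ∈ 𝒰 i, x ∈ U

/-- The asymptotic dimension of `X`, valued in `ℕ∞`. -/
noncomputable def asdim (X : Type*) [MetricSpace X] : ℕ∞ :=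
  sInf {n : ℕ∞ | ∃ m : ℕ, n = (m : ℕ∞) ∧ ASDimLE X m}

/-- TI-increasing functions `[0,∞) → [0,∞)`. -/
def TIIncreasing (ρ : NNReal → NNReal) : Prop :=
  Monotone ρ ∧ Filter.Tendsto ρ Filter.atTop Filter.atTop

/-- The variable-radius neighborhood `N(A, ρ)` with respect to a basepoint `x₀`. -/
def GrowNbhd {X : Type*} [MetricSpace X] (x₀ : X) (A : Set X) (ρ : NNReal → NNReal) : Set X :=
  {x' | ∃ x ∈ A, nndist x' x ≤ ρ (nndist x x₀)}

/-- `f` is coarsely open (with respect to basepoints `x₀`, `y₀`). -/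
def CoarselyOpen {X Y : Type*} [MetricSpace X] [MetricSpace Y] (f : X → Y)
    (x₀ : X) (y₀ : Y) : Prop :=
  ∀ A : Set X, ¬ IsBounded A → ∀ ρ : NNReal → NNReal, TIIncreasing ρ →
    ∃ ρ' : NNReal → NNReal, TIIncreasing ρ' ∧
      GrowNbhd y₀ (f '' A) ρ' ⊆ f '' GrowNbhd x₀ A ρ

/-- `N(A, R)`, the closed `R`-neighborhood of `A`. -/
def NbhdR {X : Type*} [MetricSpace X] (A : Set X) (R : ℝ) : Set X :=
  {x | ∃ a ∈ A, dist x a ≤ R}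

/-- A finite collection of subsets is gradually disjoint. -/
def GraduallyDisjoint {X : Type*} [MetricSpace X] {k : ℕ} (A : Fin k → Set X) : Prop :=
  ∀ R > (0:ℝ), ∃ B : Set X, IsBounded B ∧
    ∀ i j, i ≠ j → Disjoint (NbhdR (A i) R \ B) (NbhdR (A j) R \ B)

/-- A finite collection of subsets diverges. -/
def Diverges {X : Type*} [MetricSpace X] {k : ℕ} (A : Fin k → Set X) : Prop :=
  ∀ R > (0:ℝ), IsBounded (⋂ i, NbhdR (A i) R)

/-- A countable collection of subsets is gradually disjoint: every finite
subcollection is. -/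
def GraduallyDisjointSeq {X : Type*} [MetricSpace X] (A : ℕ → Set X) : Prop :=
  ∀ s : Finset ℕ, ∀ R > (0:ℝ), ∃ B : Set X, IsBounded B ∧
    ∀ i ∈ s, ∀ j ∈ s, i ≠ j → Disjoint (NbhdR (A i) R \ B) (NbhdR (A j) R \ B)

/-- A countable collection of subsets diverges: some finite subcollection diverges. -/
def DivergesSeq {X : Type*} [MetricSpace X] (A : ℕ → Set X) : Prop :=
  ∃ s : Finset ℕ, ∀ R > (0:ℝ), IsBounded (⋂ i ∈ s, NbhdR (A i) R)

/-- A complex-valued function on a metric space is slowly oscillating. -/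
def SlowlyOscillating {X : Type*} [MetricSpace X] (φ : X → ℂ) : Prop :=
  ∀ R > (0:ℝ), ∀ ε > (0:ℝ), ∃ A : Set X, IsBounded A ∧
    ∀ x : X, ∀ p ∈ closedBall x R \ A, ∀ p' ∈ closedBall x R \ A, dist (φ p) (φ p') ≤ ε
/-- The horizontal ray `A_k = [k,∞) × {k}`, inside `ℂ ≅ ℝ²`. -/
def Aray (k : ℕ) : Set ℂ := {z | z.im = (k:ℝ) ∧ (k:ℝ) ≤ z.re}

/-- The vertical segment `B_k = {k} × [k-1,k]`, inside `ℂ ≅ ℝ²`. -/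
def Bseg (k : ℕ) : Set ℂ := {z | z.re = (k:ℝ) ∧ (k:ℝ) - 1 ≤ z.im ∧ z.im ≤ (k:ℝ)}

/-- The tree `X = ⋃_{k ≥ 1} (A_k ∪ B_{k+1}) ⊆ ℝ²`. -/
def Xtree : Set ℂ := ⋃ k ∈ {k : ℕ | 1 ≤ k}, (Aray k ∪ Bseg (k + 1))

/-- The Euclidean length of a path in `X ⊆ ℝ² = ℂ`, i.e. its total variation. -/
noncomputable def pathLength {p q : Xtree} (γ : Path p q) : ENNReal :=
  eVariationOn (fun t => ((γ t : Xtree) : ℂ)) Set.univ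

/-- The path metric on `X`: the infimum of the Euclidean lengths of continuous
paths in `X` joining two given points (`∞` if there is none). -/
noncomputable def treePathDist (p q : Xtree) : ENNReal :=
  ⨅ γ : Path p q, pathLength γ

/-- The ray `A_k`, as a subset of the tree `X` (with its Euclidean metric). -/
def ArayX (k : ℕ) : Set Xtree := Subtype.val ⁻¹' Aray k

/-- One eighth of the plane: `P = {(x,y) ∈ ℝ² : x ≥ y ≥ 0}`, inside `ℂ ≅ ℝ²`. -/
def Pwedge : Set ℂ := {z | z.im ≤ z.re ∧ 0 ≤ z.im}

lemma Aray_subset_Xtree {k : ℕ} (hk : 1 ≤ k) : Aray k ⊆ Xtree := fun z hz =>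
  Set.mem_biUnion hk (Or.inl hz)

lemma Xtree_subset_Pwedge : Xtree ⊆ Pwedge := by
  intro z hz
  simp only [Xtree, Set.mem_iUnion, Set.mem_setOf_eq] at hz
  obtain ⟨k, hk, hz⟩ := hz
  have hk' : (1:ℝ) ≤ (k:ℝ) := by exact_mod_cast hk
  rcases hz with ⟨him, hre⟩ | ⟨hre, him1, him2⟩
  · exact ⟨him ▸ hre, him ▸ (by positivity)⟩
  · refine ⟨hre ▸ him2, ?_⟩
    have : ((k:ℝ) + 1) - 1 ≤ z.im := by exact_mod_cast him1
    linarith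

lemma complex_dist_le' (z w : ℂ) : dist z w ≤ |z.re - w.re| + |z.im - w.im| := by
  rw [Complex.dist_eq]
  calc ‖z - w‖ ≤ |(z - w).re| + |(z - w).im| :=
        Complex.norm_le_abs_re_add_abs_im _
    _ = _ := by simp

/-- Index of the nearest horizontal ray. -/
noncomputable def gk (z : ℂ) : ℕ := max 1 ⌊z.im⌋₊

/-- Projection of the wedge to the tree. -/
noncomputable def gC (z : ℂ) : ℂ := ⟨max z.re (gk z), gk z⟩

lemma gC_mem (z : ℂ) : gC z ∈ Xtree :=
  Aray_subset_Xtree (le_max_left 1 _) ⟨rfl, le_max_right _ _⟩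

lemma gC_dist {z : ℂ} (hz : z ∈ Pwedge) : dist z (gC z) ≤ 2 := by
  obtain ⟨h1, h2⟩ := hz
  have hk1 : (gk z : ℝ) ≤ z.im + 1 := by
    have h : gk z ≤ ⌊z.im⌋₊ + 1 := by
      unfold gk; omega
    calc (gk z : ℝ) ≤ (⌊z.im⌋₊ : ℝ) + 1 := by exact_mod_cast h
      _ ≤ z.im + 1 := by linarith [Nat.floor_le h2]
  have hk2 : z.im ≤ (gk z : ℝ) + 1 := by
    have h1' : z.im < (⌊z.im⌋₊ : ℝ) + 1 := Nat.lt_floor_add_one z.im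
    have h2' : (⌊z.im⌋₊ : ℝ) ≤ (gk z : ℝ) := by exact_mod_cast le_max_right 1 ⌊z.im⌋₊
    linarith
  have him : |z.im - (gC z).im| ≤ 1 := by
    have : (gC z).im = (gk z : ℝ) := rfl
    rw [this, abs_le]; constructor <;> linarith
  have hre : |z.re - (gC z).re| ≤ 1 := by
    have h3 : (gC z).re = max z.re (gk z) := rfl
    have h4 : z.re ≤ max z.re (gk z) := le_max_left _ _
    have h5 : max z.re (gk z) ≤ z.re + 1 :=
      max_le (by linarith) (by linarith)
    rw [h3, abs_le]; constructor <;> linarith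
  calc dist z (gC z) ≤ |z.re - (gC z).re| + |z.im - (gC z).im| := complex_dist_le' _ _
    _ ≤ 2 := by linarith

/-- The tree `X` with the (restricted) Euclidean metric is
coarsely equivalent to the eighth-plane `P = {(x,y) : x ≥ y ≥ 0}` with the
Euclidean metric. -/
theorem tree_coarselyEquivalent_wedge : CoarselyEquivalent Xtree Pwedge := by
  set f : Xtree → Pwedge := fun x => ⟨x.1, Xtree_subset_Pwedge x.2⟩ with hf
  set g : Pwedge → Xtree := fun p => ⟨gC p.1, gC_mem p.1⟩ with hg
  have hfd : ∀ x y : Xtree, dist (f x) (f y) = dist x y := by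
    intro x y
    rw [Subtype.dist_eq, Subtype.dist_eq]
  have hgd : ∀ p : Pwedge, dist p.1 ((g p).1 : ℂ) ≤ 2 := fun p => gC_dist p.2
  refine ⟨f, ⟨?_, ?_⟩, g, ⟨?_, ?_⟩, ?_, ?_⟩
  · -- f proper
    intro B hB
    rw [Metric.isBounded_iff] at hB ⊢
    obtain ⟨C, hC⟩ := hB
    exact ⟨C, fun x hx y hy => by rw [← hfd]; exact hC hx hy⟩
  · -- f bornologous
    intro R hR
    exact ⟨R, hR, fun x x' h => by rw [hfd]; exact h⟩
  · -- g proper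
    intro B hB
    rw [Metric.isBounded_iff] at hB ⊢
    obtain ⟨C, hC⟩ := hB
    refine ⟨C + 4, fun p hp q hq => ?_⟩
    have h1 : dist (g p) (g q) ≤ C := hC hp hq
    rw [Subtype.dist_eq] at h1 ⊢
    calc dist p.1 q.1 ≤ dist p.1 ((g p).1 : ℂ) + dist ((g p).1 : ℂ) ((g q).1 : ℂ)
          + dist ((g q).1 : ℂ) q.1 := dist_triangle4 _ _ _ _
      _ ≤ 2 + C + 2 := by
          have := hgd p; have h2 := hgd q
          rw [dist_comm ((g q).1 : ℂ) q.1]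
          linarith
      _ = C + 4 := by ring
  · -- g bornologous
    intro R hR
    refine ⟨R + 4, by linarith, fun p q h => ?_⟩
    rw [Subtype.dist_eq] at h ⊢
    calc dist ((g p).1 : ℂ) ((g q).1 : ℂ)
        ≤ dist ((g p).1 : ℂ) p.1 + dist p.1 q.1 + dist q.1 ((g q).1 : ℂ) :=
          dist_triangle4 _ _ _ _
      _ ≤ 2 + R + 2 := by
          have := hgd p; have h2 := hgd q
          rw [dist_comm ((g p).1 : ℂ) p.1]
          linarith
      _ = R + 4 := by ring
  · -- f ∘ g close to id
    refine ⟨2, by norm_num, fun p => ?_⟩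
    rw [Subtype.dist_eq, dist_comm]
    exact hgd p
  · -- g ∘ f close to id
    refine ⟨2, by norm_num, fun x => ?_⟩
    rw [Subtype.dist_eq, dist_comm]
    exact gC_dist (Xtree_subset_Pwedge x.2)
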